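/- arXiv:1905.10961 — 4 statements merged into one kernel-verified Lean document; each statement's English description precedes it below -/
import Mathlib

section
/- Suppose Condition 1 holds, Condition 2 holds with constant C satisfying 0 ≤ C < 1/2, and NGD is run with step size η satisfying 0 < η ≤ (1-2C)/(1+C)². Then for every k = 0, 1, 2, …, the residual satisfies ‖u(k) - y‖₂² ≤ (1 - η)^k ‖u(0) - y‖₂². -/
open Matrix MeasureTheory ProbabilityTheory Real
open scoped BigOperators ENNReal NNReal

/-- Euclidean norm of a finitely-indexed real vector. -/
noncomputable def enorm2 {ι : Type*} [Fintype ι] (v : ι → ℝ) : ℝ :=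
  Real.sqrt (∑ i, v i * v i)

/-- Euclidean norm of a vector in `Fin n → ℝ`. -/
noncomputable def vnorm {n : ℕ} (v : Fin n → ℝ) : ℝ := Real.sqrt (v ⬝ᵥ v)

/-- Spectral norm (ℓ²-operator norm) of a matrix. -/
noncomputable def specNorm {ι κ : Type*} [Fintype ι] [Fintype κ] (A : Matrix ι κ ℝ) : ℝ :=
  sSup {r : ℝ | ∃ v : κ → ℝ, enorm2 v = 1 ∧ r = enorm2 (A *ᵥ v)}

/-- Smallest eigenvalue of a symmetric matrix, via the Rayleigh quotient. -/
noncomputable def lamMin {n : ℕ} (A : Matrix (Fin n) (Fin n) ℝ) : ℝ :=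
  sInf {r : ℝ | ∃ v : Fin n → ℝ, vnorm v = 1 ∧ r = v ⬝ᵥ (A *ᵥ v)}

/-- Largest eigenvalue of a symmetric matrix, via the Rayleigh quotient. -/
noncomputable def lamMax {n : ℕ} (A : Matrix (Fin n) (Fin n) ℝ) : ℝ :=
  sSup {r : ℝ | ∃ v : Fin n → ℝ, vnorm v = 1 ∧ r = v ⬝ᵥ (A *ᵥ v)}

noncomputable def toE {ι : Type*} [Fintype ι] (v : ι → ℝ) : EuclideanSpace ℝ ι :=
  (WithLp.equiv 2 (ι → ℝ)).symm v

lemma toE_apply {ι : Type*} [Fintype ι] (v : ι → ℝ) (i : ι) : toE v i = v i := rfl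

lemma enorm2_eq {ι : Type*} [Fintype ι] (v : ι → ℝ) : enorm2 v = ‖toE v‖ := by
  rw [EuclideanSpace.norm_eq]
  simp [enorm2, toE_apply, ← sq, Real.norm_eq_abs, sq_abs]

lemma vnorm_eq {n : ℕ} (v : Fin n → ℝ) : vnorm v = ‖toE v‖ := by
  rw [← enorm2_eq]; rfl

lemma toE_add {ι : Type*} [Fintype ι] (v w : ι → ℝ) : toE (v + w) = toE v + toE w := rfl
lemma toE_sub {ι : Type*} [Fintype ι] (v w : ι → ℝ) : toE (v - w) = toE v - toE w := rfl
lemma toE_smul {ι : Type*} [Fintype ι] (c : ℝ) (v : ι → ℝ) : toE (c • v) = c • toE v := rfl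
lemma toE_neg {ι : Type*} [Fintype ι] (v : ι → ℝ) : toE (-v) = - toE v := rfl

lemma inner_toE {ι : Type*} [Fintype ι] (v w : ι → ℝ) :
    (inner ℝ (toE v) (toE w) : ℝ) = v ⬝ᵥ w := by
  simp [PiLp.inner_apply, toE_apply, dotProduct, mul_comm]

lemma dotProduct_le {ι : Type*} [Fintype ι] (v w : ι → ℝ) :
    v ⬝ᵥ w ≤ enorm2 v * enorm2 w := by
  rw [← inner_toE, enorm2_eq, enorm2_eq]
  exact real_inner_le_norm _ _

lemma enorm2_sq {ι : Type*} [Fintype ι] (v : ι → ℝ) : v ⬝ᵥ v = enorm2 v ^ 2 := by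
  rw [← inner_toE, enorm2_eq, real_inner_self_eq_norm_sq]

noncomputable def opE {ι κ : Type*} [Fintype ι] [Fintype κ] [DecidableEq κ]
    (A : Matrix ι κ ℝ) : ℝ :=
  ‖LinearMap.toContinuousLinearMap (Matrix.toEuclideanLin A)‖

lemma toEuclideanLin_toE {ι κ : Type*} [Fintype ι] [Fintype κ] [DecidableEq κ]
    (A : Matrix ι κ ℝ) (v : κ → ℝ) :
    Matrix.toEuclideanLin A (toE v) = toE (A *ᵥ v) :=
  Matrix.toEuclideanLin_apply_piLp_toLp A v

set_option linter.unusedSectionVars false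

lemma enorm2_smul {κ : Type*} [Fintype κ] (c : ℝ) (v : κ → ℝ) :
    enorm2 (c • v) = |c| * enorm2 v := by
  rw [enorm2_eq, enorm2_eq, toE_smul, norm_smul, Real.norm_eq_abs]

lemma enorm2_nonneg {κ : Type*} [Fintype κ] (v : κ → ℝ) : 0 ≤ enorm2 v := by
  rw [enorm2_eq]; positivity

lemma enorm2_eq_zero {κ : Type*} [Fintype κ] {v : κ → ℝ} (h : enorm2 v = 0) : v = 0 := by
  rw [enorm2_eq] at h
  have h2 : toE v = 0 := norm_eq_zero.mp h
  funext i
  simpa [toE_apply] using congrFun (congrArg (fun (x : EuclideanSpace ℝ κ) (i : κ) => x i) h2) i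

lemma enorm2_zero {κ : Type*} [Fintype κ] : enorm2 (0 : κ → ℝ) = 0 := by
  simp [enorm2]

section Spec
variable {ι κ : Type*} [Fintype ι] [Fintype κ] [DecidableEq κ]

lemma specSet_bddAbove (A : Matrix ι κ ℝ) :
    BddAbove {r : ℝ | ∃ v : κ → ℝ, enorm2 v = 1 ∧ r = enorm2 (A *ᵥ v)} := by
  refine ⟨opE A, ?_⟩
  rintro r ⟨v, hv, rfl⟩
  have h := (LinearMap.toContinuousLinearMap (Matrix.toEuclideanLin A)).le_opNorm (toE v)
  rw [enorm2_eq] at hv ⊢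
  simpa [toEuclideanLin_toE, hv, opE] using h

lemma specNorm_nonneg (A : Matrix ι κ ℝ) : 0 ≤ specNorm A := by
  apply Real.sSup_nonneg
  rintro r ⟨v, hv, rfl⟩
  exact enorm2_nonneg _

lemma mulVec_le_specNorm (A : Matrix ι κ ℝ) (v : κ → ℝ) :
    enorm2 (A *ᵥ v) ≤ specNorm A * enorm2 v := by
  rcases eq_or_ne (enorm2 v) 0 with h | h
  · rw [enorm2_eq_zero h]; simp [enorm2_zero]
  · have hv : 0 < enorm2 v := (enorm2_nonneg v).lt_of_ne (Ne.symm h)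
    set c := (enorm2 v)⁻¹ with hc
    have hmem : enorm2 (A *ᵥ (c • v)) ∈
        {r : ℝ | ∃ w : κ → ℝ, enorm2 w = 1 ∧ r = enorm2 (A *ᵥ w)} := by
      refine ⟨c • v, ?_, rfl⟩
      rw [enorm2_smul, abs_of_pos (inv_pos.mpr hv)]
      field_simp
    have hle := le_csSup (specSet_bddAbove A) hmem
    rw [Matrix.mulVec_smul, enorm2_smul, abs_of_pos (inv_pos.mpr hv)] at hle
    calc enorm2 (A *ᵥ v) = enorm2 v * ((enorm2 v)⁻¹ * enorm2 (A *ᵥ v)) := by field_simp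
    _ ≤ enorm2 v * specNorm A := mul_le_mul_of_nonneg_left hle hv.le
    _ = specNorm A * enorm2 v := mul_comm _ _

lemma opE_le_specNorm (A : Matrix ι κ ℝ) : opE A ≤ specNorm A := by
  apply ContinuousLinearMap.opNorm_le_bound _ (specNorm_nonneg A)
  intro x
  have hx : x = toE ((WithLp.equiv 2 (κ → ℝ)) x) := rfl
  rw [hx]
  have := mulVec_le_specNorm A ((WithLp.equiv 2 (κ → ℝ)) x)
  rw [enorm2_eq, enorm2_eq] at this
  simpa [toEuclideanLin_toE] using this

lemma specNorm_le_opE (A : Matrix ι κ ℝ) : specNorm A ≤ opE A := by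
  rcases Set.eq_empty_or_nonempty
      {r : ℝ | ∃ v : κ → ℝ, enorm2 v = 1 ∧ r = enorm2 (A *ᵥ v)} with h | h
  · rw [specNorm, h, Real.sSup_empty]; exact norm_nonneg _
  · apply csSup_le h
    rintro r ⟨v, hv, rfl⟩
    have hb := (LinearMap.toContinuousLinearMap (Matrix.toEuclideanLin A)).le_opNorm (toE v)
    rw [enorm2_eq] at hv ⊢
    simpa [toEuclideanLin_toE, hv, opE] using hb

lemma specNorm_eq_opE (A : Matrix ι κ ℝ) : specNorm A = opE A :=
  le_antisymm (specNorm_le_opE A) (opE_le_specNorm A)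

end Spec

lemma transpose_mulVec_le {ι κ : Type*} [Fintype ι] [Fintype κ] [DecidableEq κ]
    (A : Matrix ι κ ℝ) (v : ι → ℝ) :
    enorm2 (Aᵀ *ᵥ v) ≤ specNorm A * enorm2 v := by
  set w := Aᵀ *ᵥ v with hw
  have key : w ⬝ᵥ w = v ⬝ᵥ (A *ᵥ w) := by
    rw [Matrix.dotProduct_mulVec v A w, ← Matrix.mulVec_transpose]
  have h1 : w ⬝ᵥ w ≤ enorm2 v * (specNorm A * enorm2 w) := by
    calc w ⬝ᵥ w = v ⬝ᵥ (A *ᵥ w) := key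
    _ ≤ enorm2 v * enorm2 (A *ᵥ w) := dotProduct_le _ _
    _ ≤ enorm2 v * (specNorm A * enorm2 w) :=
        mul_le_mul_of_nonneg_left (mulVec_le_specNorm A w) (enorm2_nonneg v)
  rw [enorm2_sq] at h1
  rcases eq_or_lt_of_le (enorm2_nonneg w) with h | h
  · rw [← h]; exact mul_nonneg (specNorm_nonneg A) (enorm2_nonneg v)
  · nlinarith [h1, h]

lemma rayleigh_eq {n p : ℕ} (Jm : Matrix (Fin n) (Fin p) ℝ) (v : Fin n → ℝ) :
    v ⬝ᵥ ((Jm * Jmᵀ) *ᵥ v) = (Jmᵀ *ᵥ v) ⬝ᵥ (Jmᵀ *ᵥ v) := by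
  rw [← Matrix.mulVec_mulVec, Matrix.dotProduct_mulVec v Jm, ← Matrix.mulVec_transpose]

lemma vnorm_eq_enorm2 {n : ℕ} (v : Fin n → ℝ) : vnorm v = enorm2 v := by
  rw [vnorm_eq, enorm2_eq]

lemma rayleigh_bddBelow {n p : ℕ} (Jm : Matrix (Fin n) (Fin p) ℝ) :
    BddBelow {r : ℝ | ∃ v : Fin n → ℝ, vnorm v = 1 ∧ r = v ⬝ᵥ ((Jm * Jmᵀ) *ᵥ v)} := by
  refine ⟨0, ?_⟩
  rintro r ⟨v, hv, rfl⟩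
  rw [rayleigh_eq, enorm2_sq]
  positivity

lemma lamMin_mul_le {n p : ℕ} (Jm : Matrix (Fin n) (Fin p) ℝ) (w : Fin n → ℝ) :
    lamMin (Jm * Jmᵀ) * enorm2 w ^ 2 ≤ w ⬝ᵥ ((Jm * Jmᵀ) *ᵥ w) := by
  rcases eq_or_ne (enorm2 w) 0 with h | h
  · rw [enorm2_eq_zero h, enorm2_zero]
    simp [Matrix.mulVec_zero]
  · have hw : 0 < enorm2 w := (enorm2_nonneg w).lt_of_ne (Ne.symm h)
    set c := (enorm2 w)⁻¹ with hc
    have hcpos : 0 < c := inv_pos.mpr hw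
    have hmem : (c • w) ⬝ᵥ ((Jm * Jmᵀ) *ᵥ (c • w)) ∈
        {r : ℝ | ∃ v : Fin n → ℝ, vnorm v = 1 ∧ r = v ⬝ᵥ ((Jm * Jmᵀ) *ᵥ v)} := by
      refine ⟨c • w, ?_, rfl⟩
      rw [vnorm_eq_enorm2, enorm2_smul, abs_of_pos hcpos, hc, inv_mul_cancel₀ h]
    have hle := csInf_le (rayleigh_bddBelow Jm) hmem
    have hexp : (c • w) ⬝ᵥ ((Jm * Jmᵀ) *ᵥ (c • w)) = c ^ 2 * (w ⬝ᵥ ((Jm * Jmᵀ) *ᵥ w)) := by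
      rw [Matrix.mulVec_smul, smul_dotProduct, dotProduct_smul]
      simp [smul_eq_mul]; ring
    rw [hexp] at hle
    have : lamMin (Jm * Jmᵀ) ≤ c ^ 2 * (w ⬝ᵥ ((Jm * Jmᵀ) *ᵥ w)) := hle
    have hc2 : c ^ 2 = (enorm2 w ^ 2)⁻¹ := by rw [hc]; field_simp
    rw [hc2] at this
    have h2 : 0 < enorm2 w ^ 2 := by positivity
    calc lamMin (Jm * Jmᵀ) * enorm2 w ^ 2
        ≤ (enorm2 w ^ 2)⁻¹ * (w ⬝ᵥ ((Jm * Jmᵀ) *ᵥ w)) * enorm2 w ^ 2 :=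
          mul_le_mul_of_nonneg_right this h2.le
    _ = w ⬝ᵥ ((Jm * Jmᵀ) *ᵥ w) := by field_simp

lemma lamMin_pos {n p : ℕ} (hn : 0 < n) (Jm : Matrix (Fin n) (Fin p) ℝ)
    (hpd : (Jm * Jmᵀ).PosDef) : 0 < lamMin (Jm * Jmᵀ) := by
  set A := Jm * Jmᵀ with hA
  set f : EuclideanSpace ℝ (Fin n) → ℝ :=
    fun x => (inner ℝ x ((Matrix.toEuclideanLin A).toContinuousLinearMap x) : ℝ) with hf
  have hfc : Continuous f := continuous_id.inner
    (LinearMap.toContinuousLinearMap (Matrix.toEuclideanLin A)).continuous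
  have hfval : ∀ v : Fin n → ℝ, f (toE v) = v ⬝ᵥ (A *ᵥ v) := by
    intro v
    have : (LinearMap.toContinuousLinearMap (Matrix.toEuclideanLin A)) (toE v)
        = toE (A *ᵥ v) := toEuclideanLin_toE A v
    rw [hf]; simp only [this]
    exact inner_toE v (A *ᵥ v)
  -- the unit vector
  set v0 : Fin n → ℝ := Pi.single ⟨0, hn⟩ 1 with hv0
  have hv0n : vnorm v0 = 1 := by
    rw [vnorm_eq_enorm2, enorm2]
    have : ∑ i, v0 i * v0 i = 1 := by
      rw [hv0]
      rw [Finset.sum_eq_single (⟨0, hn⟩ : Fin n)]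
      · simp
      · intro b _ hb; simp [Pi.single_apply, hb]
      · intro hb; simp at hb
    rw [this, Real.sqrt_one]
  have hx0 : toE v0 ∈ Metric.sphere (0 : EuclideanSpace ℝ (Fin n)) 1 := by
    rw [Metric.mem_sphere, dist_zero_right, ← vnorm_eq, hv0n]
  obtain ⟨z, hz, hzmin⟩ := (isCompact_sphere (0 : EuclideanSpace ℝ (Fin n)) 1).exists_isMinOn
    ⟨toE v0, hx0⟩ hfc.continuousOn
  set w : Fin n → ℝ := (WithLp.equiv 2 (Fin n → ℝ)) z with hwdef
  have hzw : z = toE w := rfl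
  have hwn : vnorm w = 1 := by
    rw [vnorm_eq, ← hzw]
    rw [Metric.mem_sphere, dist_zero_right] at hz
    exact hz
  have hwne : w ≠ 0 := by
    intro h0
    rw [h0] at hwn
    rw [vnorm_eq_enorm2, enorm2_zero] at hwn
    norm_num at hwn
  have hfw : 0 < f z := by
    rw [hzw, hfval]
    have := hpd.dotProduct_mulVec_pos hwne
    simpa using this
  have : f z ≤ lamMin A := by
    show f z ≤ sInf {r : ℝ | ∃ v : Fin n → ℝ, vnorm v = 1 ∧ r = v ⬝ᵥ (A *ᵥ v)}
    refine le_csInf ?_ ?_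
    · exact ⟨f (toE v0), ⟨v0, hv0n, (hfval v0)⟩⟩
    rintro r ⟨v, hv, rfl⟩
    have hvs : toE v ∈ Metric.sphere (0 : EuclideanSpace ℝ (Fin n)) 1 := by
      rw [Metric.mem_sphere, dist_zero_right, ← vnorm_eq, hv]
    have h3 : f z ≤ f (toE v) := hzmin hvs
    rwa [hfval] at h3
  linarith

lemma mvt_aux {n p : ℕ} (u : (Fin p → ℝ) → Fin n → ℝ)
    (J : (Fin p → ℝ) → Matrix (Fin n) (Fin p) ℝ)
    (hJ : ∀ θ, HasFDerivAt u (LinearMap.toContinuousLinearMap ((J θ).mulVecLin)) θ)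
    (a b : Fin p → ℝ) (K : ℝ)
    (hK : ∀ x ∈ segment ℝ a b, opE (J x - J a) ≤ K) :
    enorm2 (u b - u a - (J a) *ᵥ (b - a)) ≤ K * enorm2 (b - a) := by
  set eP := EuclideanSpace.equiv (Fin p) ℝ with heP
  set eN := EuclideanSpace.equiv (Fin n) ℝ with heN
  set F : EuclideanSpace ℝ (Fin p) → EuclideanSpace ℝ (Fin n) :=
    fun x => eN.symm (u (eP x)) with hF
  set D : EuclideanSpace ℝ (Fin p) → (EuclideanSpace ℝ (Fin p) →L[ℝ] EuclideanSpace ℝ (Fin n)) :=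
    fun x => LinearMap.toContinuousLinearMap (Matrix.toEuclideanLin (J (eP x))) with hD
  have hFd : ∀ x : EuclideanSpace ℝ (Fin p), HasFDerivAt F (D x) x := by
    intro x
    have h1 : HasFDerivAt (u ∘ eP)
        ((LinearMap.toContinuousLinearMap ((J (eP x)).mulVecLin)).comp
          (eP : EuclideanSpace ℝ (Fin p) →L[ℝ] (Fin p → ℝ))) x :=
      (hJ (eP x)).comp x eP.hasFDerivAt
    have h2 : HasFDerivAt (eN.symm ∘ (u ∘ eP))
        ((eN.symm : (Fin n → ℝ) →L[ℝ] EuclideanSpace ℝ (Fin n)).comp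
          ((LinearMap.toContinuousLinearMap ((J (eP x)).mulVecLin)).comp
            (eP : EuclideanSpace ℝ (Fin p) →L[ℝ] (Fin p → ℝ)))) x :=
      (eN.symm.hasFDerivAt).comp x h1
    have heq : D x = (eN.symm : (Fin n → ℝ) →L[ℝ] EuclideanSpace ℝ (Fin n)).comp
          ((LinearMap.toContinuousLinearMap ((J (eP x)).mulVecLin)).comp
            (eP : EuclideanSpace ℝ (Fin p) →L[ℝ] (Fin p → ℝ))) := by
      refine ContinuousLinearMap.ext fun z => ?_
      rfl
    rw [heq]
    exact h2
  have hDsub : ∀ x : EuclideanSpace ℝ (Fin p),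
      D x - D (toE a) = LinearMap.toContinuousLinearMap
        (Matrix.toEuclideanLin (J (eP x) - J a)) := by
    intro x
    have : eP (toE a) = a := rfl
    rw [hD]
    simp only [this]
    rw [map_sub (Matrix.toEuclideanLin (𝕜 := ℝ) (m := Fin n) (n := Fin p))]
    exact (map_sub (LinearMap.toContinuousLinearMap (𝕜 := ℝ)
      (E := EuclideanSpace ℝ (Fin p)) (F' := EuclideanSpace ℝ (Fin n))) _ _).symm
  have hsegmap : ∀ x : EuclideanSpace ℝ (Fin p),
      x ∈ segment ℝ (toE a) (toE b) → eP x ∈ segment ℝ a b := by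
    rintro x ⟨s, t, hs, ht, hst, rfl⟩
    exact ⟨s, t, hs, ht, hst, rfl⟩
  have key := Convex.norm_image_sub_le_of_norm_hasFDerivWithin_le'
    (f := F) (f' := D) (φ := D (toE a)) (s := segment ℝ (toE a) (toE b)) (C := K)
    (fun x _ => (hFd x).hasFDerivWithinAt)
    (fun x hx => by
      rw [hDsub x]
      exact hK (eP x) (hsegmap x hx))
    (convex_segment _ _) (left_mem_segment ℝ _ _) (right_mem_segment ℝ _ _)
  have hFa : F (toE a) = toE (u a) := rfl
  have hFb : F (toE b) = toE (u b) := rfl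
  have hDa : D (toE a) (toE b - toE a) = toE ((J a) *ᵥ (b - a)) := by
    have h1 : toE b - toE a = toE (b - a) := (toE_sub b a).symm
    rw [h1]
    exact toEuclideanLin_toE (J a) (b - a)
  rw [hFa, hFb, hDa] at key
  rw [enorm2_eq, enorm2_eq, toE_sub, toE_sub]
  exact key

lemma enorm2_triangle {ι : Type*} [Fintype ι] (a b : ι → ℝ) :
    enorm2 (a + b) ≤ enorm2 a + enorm2 b := by
  rw [enorm2_eq, enorm2_eq, enorm2_eq, toE_add]; exact norm_add_le _ _

lemma enorm2_lower {ι : Type*} [Fintype ι] (a b : ι → ℝ) :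
    enorm2 a - enorm2 b ≤ enorm2 (a + b) := by
  rw [enorm2_eq, enorm2_eq, enorm2_eq, toE_add]
  have := norm_add_le (toE a + toE b) (-(toE b))
  simp only [add_neg_cancel_right, norm_neg] at this
  linarith

lemma enorm2_neg {ι : Type*} [Fintype ι] (a : ι → ℝ) : enorm2 (-a) = enorm2 a := by
  rw [enorm2_eq, enorm2_eq, toE_neg, norm_neg]

lemma enorm2_sub_rev {ι : Type*} [Fintype ι] (a b : ι → ℝ) :
    enorm2 (a - b) = enorm2 (b - a) := by
  rw [enorm2_eq, enorm2_eq, toE_sub, toE_sub, norm_sub_rev]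

lemma le_of_sq_le_sq' {x y : ℝ} (hx : 0 ≤ x) (hy : 0 ≤ y) (h : x^2 ≤ y^2) : x ≤ y := by
  nlinarith [sq_nonneg (x - y), sq_nonneg (x + y)]

lemma opE_triangle3 {ι κ : Type*} [Fintype ι] [Fintype κ] [DecidableEq κ]
    (A B Cm : Matrix ι κ ℝ) : opE (A - B) ≤ opE (A - Cm) + opE (Cm - B) := by
  have h : Matrix.toEuclideanLin (A - B) =
      Matrix.toEuclideanLin (A - Cm) + Matrix.toEuclideanLin (Cm - B) := by
    rw [← map_add]; congr 1; abel
  unfold opE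
  rw [h, map_add]
  exact norm_add_le _ _

lemma opE_rev {ι κ : Type*} [Fintype ι] [Fintype κ] [DecidableEq κ]
    (A B : Matrix ι κ ℝ) : opE (A - B) = opE (B - A) := by
  unfold opE
  have h : Matrix.toEuclideanLin (A - B) = -(Matrix.toEuclideanLin (B - A)) := by
    rw [← map_neg]; congr 1; abel
  rw [h, map_neg, norm_neg]

/-- Natural gradient descent iterates for a network with outputs `u`, Jacobian `J`,
targets `y`, step size `η`, starting at `θ0`. -/
noncomputable def ngd {n p : ℕ} (J : (Fin p → ℝ) → Matrix (Fin n) (Fin p) ℝ)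
    (u : (Fin p → ℝ) → Fin n → ℝ) (y : Fin n → ℝ) (η : ℝ) (θ0 : Fin p → ℝ) :
    ℕ → Fin p → ℝ
  | 0 => θ0
  | k + 1 =>
      ngd J u y η θ0 k -
        η • ((J (ngd J u y η θ0 k))ᵀ *ᵥ
          ((J (ngd J u y η θ0 k) * (J (ngd J u y η θ0 k))ᵀ)⁻¹ *ᵥ
            (u (ngd J u y η θ0 k) - y)))

set_option maxHeartbeats 1000000 in
/-- **Theorem 1 (Natural gradient descent).**
Under Condition 1 (the Gram matrix at initialization is positive definite) and
Condition 2 (`C`-stable Jacobian with `0 ≤ C < 1/2`), NGD with step size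
`0 < η ≤ (1 - 2C)/(1 + C)²` satisfies
`‖u(k) - y‖² ≤ (1 - η)^k ‖u(0) - y‖²` for all `k`. -/
theorem ngd_linear_convergence {n p : ℕ}
    (u : (Fin p → ℝ) → Fin n → ℝ) (J : (Fin p → ℝ) → Matrix (Fin n) (Fin p) ℝ)
    (hJ : ∀ θ, HasFDerivAt u (LinearMap.toContinuousLinearMap ((J θ).mulVecLin)) θ)
    (hJcont : Continuous J)
    (y : Fin n → ℝ) (θ0 : Fin p → ℝ)
    -- Condition 1: the Gram matrix at initialization is positive definite
    (hG0 : (J θ0 * (J θ0)ᵀ).PosDef)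
    -- Condition 2: C-stable Jacobian, 0 ≤ C < 1/2
    (C : ℝ) (hC0 : 0 ≤ C) (hC : C < 1 / 2)
    (hstab : ∀ θ : Fin p → ℝ,
      vnorm (θ - θ0) ≤ 3 * vnorm (y - u θ0) / Real.sqrt (lamMin (J θ0 * (J θ0)ᵀ)) →
      specNorm (J θ - J θ0) ≤ C / 3 * Real.sqrt (lamMin (J θ0 * (J θ0)ᵀ)))
    (η : ℝ) (hη0 : 0 < η) (hη : η ≤ (1 - 2 * C) / (1 + C) ^ 2) :
    ∀ k : ℕ, vnorm (u (ngd J u y η θ0 k) - y) ^ 2 ≤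
      (1 - η) ^ k * vnorm (u θ0 - y) ^ 2 := by
  have hη1 : η ≤ 1 := by
    have h1 : (0:ℝ) < (1+C)^2 := by positivity
    have h2 : η * (1+C)^2 ≤ 1 - 2*C := (le_div_iff₀ h1).mp hη
    nlinarith
  rcases Nat.eq_zero_or_pos n with hn0 | hn
  · subst hn0
    intro k
    have hz : ∀ v : Fin 0 → ℝ, vnorm v = 0 := by
      intro v; simp [vnorm, dotProduct]
    rw [hz, hz]
    have : (0:ℝ) ≤ (1-η)^k := pow_nonneg (by linarith) k
    nlinarith
  -- main case
  set θs : ℕ → Fin p → ℝ := ngd J u y η θ0 with hθs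
  set G0 := J θ0 * (J θ0)ᵀ with hG0def
  set lam0 := lamMin G0 with hlam0def
  have hlam0 : 0 < lam0 := lamMin_pos hn (J θ0) hG0
  set s0 := Real.sqrt lam0 with hs0def
  have hs0 : 0 < s0 := Real.sqrt_pos.mpr hlam0
  set δ := enorm2 (u θ0 - y) with hδdef
  have hδ0 : 0 ≤ δ := enorm2_nonneg _
  set β := (1 - C/3) * s0 with hβdef
  have hβ : 0 < β := by nlinarith
  set q := Real.sqrt (1 - η) with hqdef
  have hq0 : 0 ≤ q := Real.sqrt_nonneg _
  have hqsq : q^2 = 1 - η := Real.sq_sqrt (by linarith)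
  have hq1 : q ≤ 1 := by nlinarith
  have hgeo : ∀ m : ℕ, (∑ i ∈ Finset.range m, q^i) * η ≤ 2 := by
    intro m
    have h := geom_sum_mul q m
    have hη' : η = (1-q)*(1+q) := by nlinarith
    have hid : (∑ i ∈ Finset.range m, q^i) * η = (1 - q^m) * (1+q) := by
      calc (∑ i ∈ Finset.range m, q^i) * η
          = ((∑ i ∈ Finset.range m, q^i) * (q-1)) * (-(1+q)) := by rw [hη']; ring
      _ = (q^m - 1) * (-(1+q)) := by rw [h]
      _ = (1 - q^m) * (1+q) := by ring
    rw [hid]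
    have hqm0 : (0:ℝ) ≤ q^m := pow_nonneg hq0 m
    have hqm1 : q^m ≤ 1 := pow_le_one₀ hq0 hq1
    nlinarith
  -- the stability consequence in enorm2 form
  have hball : ∀ x : Fin p → ℝ, enorm2 (x - θ0) ≤ 2 * δ / β →
      specNorm (J x - J θ0) ≤ C/3 * s0 := by
    intro x hx
    apply hstab
    rw [vnorm_eq_enorm2, vnorm_eq_enorm2, enorm2_sub_rev y (u θ0), ← hδdef]
    have h23 : 2 * δ / β ≤ 3 * δ / s0 := by
      rw [div_le_div_iff₀ hβ hs0, hβdef]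
      nlinarith [mul_nonneg (mul_nonneg hδ0 hs0.le) (by linarith : (0:ℝ) ≤ 1 - C)]
    linarith
  -- lower bound for J θ0 transpose
  have hJ0low : ∀ v : Fin n → ℝ, s0 * enorm2 v ≤ enorm2 ((J θ0)ᵀ *ᵥ v) := by
    intro v
    have h1 := lamMin_mul_le (J θ0) v
    rw [rayleigh_eq, enorm2_sq] at h1
    have h2 : (s0 * enorm2 v)^2 ≤ enorm2 ((J θ0)ᵀ *ᵥ v)^2 := by
      have : (s0 * enorm2 v)^2 = lam0 * enorm2 v ^2 := by
        rw [mul_pow, hs0def, Real.sq_sqrt hlam0.le]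
      rw [this]; exact h1
    exact le_of_sq_le_sq' (mul_nonneg hs0.le (enorm2_nonneg v)) (enorm2_nonneg _) h2
  -- main induction
  have main : ∀ k, enorm2 (u (θs k) - y) ≤ q^k * δ ∧
      enorm2 (θs k - θ0) ≤ (∑ i ∈ Finset.range k, q^i) * (η * δ / β) := by
    intro k
    induction k with
    | zero =>
      constructor
      · have : θs 0 = θ0 := rfl
        rw [this, pow_zero, one_mul]
      · have : θs 0 = θ0 := rfl
        rw [this, sub_self, enorm2_zero]
        simp
    | succ k ih =>
      obtain ⟨hA, hB⟩ := ih
      set θk := θs k with hθk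
      set rk := u θk - y with hrkdef
      set Rk := enorm2 rk with hRkdef
      have hRk0 : 0 ≤ Rk := enorm2_nonneg _
      set Jk := J θk with hJkdef
      set Gk := Jk * Jkᵀ with hGkdef
      set w := Gk⁻¹ *ᵥ rk with hwdef
      have hstep : θs (k+1) = θk - η • (Jkᵀ *ᵥ w) := rfl
      -- θk is in the ball
      have hballk : enorm2 (θk - θ0) ≤ 2 * δ / β := by
        have hδβ : (0:ℝ) ≤ δ / β := by positivity
        have h2 : (∑ i ∈ Finset.range k, q ^ i) * (η * δ / β) ≤ 2 * δ / β := by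
          calc (∑ i ∈ Finset.range k, q^i) * (η * δ / β)
              = ((∑ i ∈ Finset.range k, q^i) * η) * (δ/β) := by ring
          _ ≤ 2 * (δ/β) := mul_le_mul_of_nonneg_right (hgeo k) hδβ
          _ = 2 * δ / β := by ring
        linarith
      have hJkstab : specNorm (Jk - J θ0) ≤ C/3 * s0 := hball θk hballk
      -- lower bound for Jk transpose
      have hGklow : ∀ v : Fin n → ℝ, β * enorm2 v ≤ enorm2 (Jkᵀ *ᵥ v) := by
        intro v
        have hsplit : Jkᵀ *ᵥ v = (J θ0)ᵀ *ᵥ v + (Jk - J θ0)ᵀ *ᵥ v := by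
          have hJJ : J θ0 + (Jk - J θ0) = Jk := by abel
          rw [← Matrix.add_mulVec, ← Matrix.transpose_add, hJJ]
        have htri : enorm2 ((J θ0)ᵀ *ᵥ v) - enorm2 ((Jk - J θ0)ᵀ *ᵥ v)
            ≤ enorm2 (Jkᵀ *ᵥ v) := by
          rw [hsplit]; exact enorm2_lower _ _
        have hD2 : enorm2 ((Jk - J θ0)ᵀ *ᵥ v) ≤ (C/3*s0) * enorm2 v :=
          (transpose_mulVec_le (Jk - J θ0) v).trans
            (mul_le_mul_of_nonneg_right hJkstab (enorm2_nonneg v))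
        have h0 := hJ0low v
        have hβe : β * enorm2 v = s0 * enorm2 v - C/3*s0 * enorm2 v := by
          rw [hβdef]; ring
        rw [hβe]
        nlinarith [h0, hD2, htri]
      -- Rayleigh lower bound for Gk
      have hGkq : ∀ v : Fin n → ℝ, β^2 * enorm2 v^2 ≤ v ⬝ᵥ (Gk *ᵥ v) := by
        intro v
        rw [hGkdef, rayleigh_eq, enorm2_sq]
        calc β^2 * enorm2 v^2 = (β * enorm2 v)^2 := by ring
        _ ≤ enorm2 (Jkᵀ *ᵥ v)^2 :=
            pow_le_pow_left₀ (mul_nonneg hβ.le (enorm2_nonneg v)) (hGklow v) 2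
      -- Gk is positive definite
      have hPD : Gk.PosDef := by
        refine Matrix.PosDef.of_dotProduct_mulVec_pos ?_ ?_
        · show Gkᴴ = Gk
          rw [hGkdef]
          ext i j
          simp [Matrix.conjTranspose_apply, Matrix.mul_apply, Matrix.transpose_apply,
            mul_comm]
        · intro x hx
          have hxe : 0 < enorm2 x := by
            rcases eq_or_lt_of_le (enorm2_nonneg x) with h0 | h0
            · exact absurd (enorm2_eq_zero h0.symm) hx
            · exact h0
          have h1 := hGkq x
          have h2 : 0 < x ⬝ᵥ (Gk *ᵥ x) := lt_of_lt_of_le (by positivity) h1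
          simpa using h2
      have hdet : IsUnit Gk.det := isUnit_iff_ne_zero.mpr hPD.det_pos.ne'
      have hGinv : Gk * Gk⁻¹ = 1 := Matrix.mul_nonsing_inv _ hdet
      have hGw : Gk *ᵥ w = rk := by
        rw [hwdef, Matrix.mulVec_mulVec, hGinv, Matrix.one_mulVec]
      -- bound on the step direction
      have hJtw : enorm2 (Jkᵀ *ᵥ w) ≤ Rk / β := by
        have h1 : w ⬝ᵥ (Gk *ᵥ w) = enorm2 (Jkᵀ *ᵥ w)^2 := by
          rw [hGkdef, rayleigh_eq, enorm2_sq]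
        have h2 : w ⬝ᵥ (Gk *ᵥ w) = w ⬝ᵥ rk := by rw [hGw]
        have h3 : w ⬝ᵥ rk ≤ enorm2 w * Rk := dotProduct_le w rk
        have h4 : β^2 * enorm2 w^2 ≤ enorm2 w * Rk := by
          have := hGkq w
          linarith [h2 ▸ this, h3]
        rcases eq_or_lt_of_le (enorm2_nonneg w) with h0 | h0
        · have hw0 : enorm2 (Jkᵀ *ᵥ w) = 0 := by
            rw [enorm2_eq_zero h0.symm, Matrix.mulVec_zero, enorm2_zero]
          rw [hw0]; positivity
        · have h5 : β^2 * enorm2 w ≤ Rk := by nlinarith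
          have h6 : enorm2 (Jkᵀ *ᵥ w)^2 ≤ (Rk/β)^2 := by
            rw [← h1, h2]
            calc w ⬝ᵥ rk ≤ enorm2 w * Rk := h3
            _ ≤ (Rk/β^2) * Rk := by
                apply mul_le_mul_of_nonneg_right _ hRk0
                rw [le_div_iff₀ (by positivity)]
                nlinarith
            _ = (Rk/β)^2 := by field_simp
          exact le_of_sq_le_sq' (enorm2_nonneg _) (by positivity) h6
      have hstepnorm : enorm2 (θs (k+1) - θk) ≤ η * Rk / β := by
        have hd : θs (k+1) - θk = -(η • (Jkᵀ *ᵥ w)) := by rw [hstep]; abel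
        rw [hd, enorm2_neg, enorm2_smul, abs_of_pos hη0]
        calc η * enorm2 (Jkᵀ *ᵥ w) ≤ η * (Rk/β) :=
              mul_le_mul_of_nonneg_left hJtw hη0.le
        _ = η * Rk / β := by ring
      -- new distance bound
      have hB' : enorm2 (θs (k+1) - θ0) ≤
          (∑ i ∈ Finset.range (k+1), q^i) * (η * δ / β) := by
        have htri : enorm2 (θs (k+1) - θ0)
            ≤ enorm2 (θk - θ0) + enorm2 (θs (k+1) - θk) := by
          have hsp : θs (k+1) - θ0 = (θk - θ0) + (θs (k+1) - θk) := by abel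
          rw [hsp]; exact enorm2_triangle _ _
        have h1 : η * Rk / β ≤ q^k * (η * δ / β) := by
          calc η * Rk / β = (η/β) * Rk := by ring
          _ ≤ (η/β) * (q^k * δ) := mul_le_mul_of_nonneg_left hA (by positivity)
          _ = q^k * (η * δ / β) := by ring
        rw [Finset.sum_range_succ]
        have hexp : (∑ i ∈ Finset.range k, q^i + q^k) * (η*δ/β)
            = (∑ i ∈ Finset.range k, q^i)*(η*δ/β) + q^k*(η*δ/β) := by ring
        rw [hexp]
        linarith
      -- all the segment points are in the ball
      have hb1 : enorm2 (θs (k+1) - θ0) ≤ 2*δ/β := by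
        have hδβ : (0:ℝ) ≤ δ / β := by positivity
        have h2 : (∑ i ∈ Finset.range (k+1), q ^ i) * (η * δ / β) ≤ 2 * δ / β := by
          calc (∑ i ∈ Finset.range (k+1), q^i) * (η * δ / β)
              = ((∑ i ∈ Finset.range (k+1), q^i) * η) * (δ/β) := by ring
          _ ≤ 2 * (δ/β) := mul_le_mul_of_nonneg_right (hgeo (k+1)) hδβ
          _ = 2 * δ / β := by ring
        linarith
      have hseg : ∀ x ∈ segment ℝ θk (θs (k+1)), opE (J x - Jk) ≤ 2*(C/3) * s0 := by
        rintro x ⟨a, b, ha, hb, hab, rfl⟩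
        have hx0 : enorm2 (a • θk + b • θs (k+1) - θ0) ≤ 2*δ/β := by
          have hcombo : a • θk + b • θs (k+1) - θ0
              = a • (θk - θ0) + b • (θs (k+1) - θ0) := by
            rw [smul_sub, smul_sub]
            have hz : a • θ0 + b • θ0 = θ0 := by
              rw [← add_smul, hab, one_smul]
            nth_rewrite 1 [← hz]
            abel
          rw [hcombo]
          calc enorm2 (a • (θk - θ0) + b • (θs (k+1) - θ0))
              ≤ enorm2 (a • (θk - θ0)) + enorm2 (b • (θs (k+1) - θ0)) :=
                enorm2_triangle _ _
          _ = a * enorm2 (θk - θ0) + b * enorm2 (θs (k+1) - θ0) := by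
              rw [enorm2_smul, enorm2_smul, abs_of_nonneg ha, abs_of_nonneg hb]
          _ ≤ a * (2*δ/β) + b * (2*δ/β) :=
              add_le_add (mul_le_mul_of_nonneg_left hballk ha)
                (mul_le_mul_of_nonneg_left hb1 hb)
          _ = 2*δ/β := by rw [← add_mul, hab, one_mul]
        have hx1 := hball _ hx0
        calc opE (J (a • θk + b • θs (k+1)) - Jk)
            ≤ opE (J (a • θk + b • θs (k+1)) - J θ0) + opE (J θ0 - Jk) :=
              opE_triangle3 _ _ _
        _ = specNorm (J (a • θk + b • θs (k+1)) - J θ0) + specNorm (Jk - J θ0) := by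
            rw [specNorm_eq_opE, specNorm_eq_opE, opE_rev (J θ0) Jk]
        _ ≤ C/3*s0 + C/3*s0 := add_le_add hx1 hJkstab
        _ = 2*(C/3)*s0 := by ring
      -- mean value estimate
      have hmvt := mvt_aux u J hJ θk (θs (k+1)) (2*(C/3)*s0) hseg
      have hlin : Jk *ᵥ (θs (k+1) - θk) = -(η • rk) := by
        have hd : θs (k+1) - θk = -(η • (Jkᵀ *ᵥ w)) := by rw [hstep]; abel
        rw [hd]
        rw [Matrix.mulVec_neg, Matrix.mulVec_smul, Matrix.mulVec_mulVec, ← hGkdef, hGw]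
      set Ev := u (θs (k+1)) - u θk - Jk *ᵥ (θs (k+1) - θk) with hEvdef
      have hEvb : enorm2 Ev ≤ 2*(C/3)*s0 * (η * Rk / β) := by
        refine hmvt.trans ?_
        exact mul_le_mul_of_nonneg_left hstepnorm (by positivity)
      have hdecomp : u (θs (k+1)) - y = (1 - η) • rk + Ev := by
        have h1 : u (θs (k+1)) - y
            = Ev + Jk *ᵥ (θs (k+1) - θk) + (u θk - y) := by
          rw [hEvdef]; abel
        rw [h1, hlin, ← hrkdef]
        have h2 : (1-η) • rk = rk - η • rk := by
          rw [sub_smul, one_smul]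
        rw [h2]; abel
      have hrate : enorm2 (u (θs (k+1)) - y) ≤ (1-η) * Rk + 2*(C/3)*s0 * (η*Rk/β) := by
        rw [hdecomp]
        calc enorm2 ((1-η) • rk + Ev) ≤ enorm2 ((1-η) • rk) + enorm2 Ev :=
              enorm2_triangle _ _
        _ = (1-η) * Rk + enorm2 Ev := by
            rw [enorm2_smul, abs_of_nonneg (by linarith : (0:ℝ) ≤ 1-η)]
        _ ≤ (1-η) * Rk + 2*(C/3)*s0 * (η*Rk/β) := by linarith
      have h3C : (0:ℝ) < 3 - C := by linarith
      have hsβ : 2*(C/3)*s0 * (η*Rk/β) = η * Rk * (2*C/(3-C)) := by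
        rw [hβdef]
        field_simp
      set ρ := 1 - η + η*(2*C/(3-C)) with hρdef
      have hρb : enorm2 (u (θs (k+1)) - y) ≤ ρ * Rk := by
        rw [hρdef]
        have : (1 - η + η*(2*C/(3-C))) * Rk
            = (1-η) * Rk + η * Rk * (2*C/(3-C)) := by ring
        rw [this, ← hsβ]
        exact hrate
      have hρ0 : 0 ≤ ρ := by
        have : 0 ≤ η*(2*C/(3-C)) :=
          mul_nonneg hη0.le (div_nonneg (by linarith) h3C.le)
        rw [hρdef]; linarith
      have hρq : ρ ≤ q := by
        have hηb : η * (1+C)^2 ≤ 1 - 2*C := by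
          have h1 : (0:ℝ) < (1+C)^2 := by positivity
          exact (le_div_iff₀ h1).mp hη
        have key : η * (9*(1-C)^2) ≤ 9 - 18*C + 5*C^2 := by
          nlinarith [hηb, mul_nonneg hC0 hC0, mul_nonneg (mul_nonneg hC0 hC0) hC0,
            mul_nonneg (mul_nonneg (mul_nonneg hC0 hC0) hC0) hC0, hη0.le]
        have hρsq : ρ^2 ≤ 1 - η := by
          have hexp : ρ = ((3-C)*(1-η) + 2*η*C)/(3-C) := by
            rw [hρdef]; field_simp
          rw [hexp, div_pow, div_le_iff₀ (by positivity)]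
          nlinarith [mul_nonneg hη0.le (sub_nonneg.mpr key)]
        apply le_of_sq_le_sq' hρ0 hq0
        rw [hqsq]; exact hρsq
      constructor
      · calc enorm2 (u (θs (k+1)) - y) ≤ ρ * Rk := hρb
        _ ≤ q * Rk := mul_le_mul_of_nonneg_right hρq hRk0
        _ ≤ q * (q^k * δ) := mul_le_mul_of_nonneg_left hA hq0
        _ = q^(k+1) * δ := by ring
      · exact hB'
  intro k
  obtain ⟨h1, _⟩ := main k
  rw [vnorm_eq_enorm2, vnorm_eq_enorm2, ← hδdef]
  calc enorm2 (u (θs k) - y) ^ 2 ≤ (q^k * δ)^2 :=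
        pow_le_pow_left₀ (enorm2_nonneg _) h1 2
  _ = (q^2)^k * δ^2 := by rw [mul_pow, ← pow_mul, mul_comm k 2, pow_mul]
  _ = (1-η)^k * δ^2 := by rw [hqsq]
end

section
/- Fix a positive integer k. Suppose the weight vector w ∈ ℝ^{md} satisfies, for every i = 1, …, n, the bound ‖w - w(0)‖₂ ≤ √k · [w_r(0)ᵀ x_i]_{k-}, where [w_r(0)ᵀ x_i]_{k-} denotes the k-th smallest value among {|w_1(0)ᵀx_i|, …, |w_m(0)ᵀx_i|}. Then ‖J(w) - J(w(0))‖₂² ≤ 2nk/m in spectral norm. -/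
open Matrix MeasureTheory ProbabilityTheory Real
open scoped BigOperators ENNReal NNReal

/-- Output of the two-layer ReLU network `f(w,a,x) = (1/√m) ∑ᵣ aᵣ ReLU(wᵣᵀ x)` on each
of the `n` training inputs. -/
noncomputable def netOut {d n m : ℕ} (x : Fin n → Fin d → ℝ) (a : Fin m → ℝ)
    (w : Fin m → Fin d → ℝ) : Fin n → ℝ :=
  fun i => (1 / Real.sqrt m) * ∑ r : Fin m, a r * max (w r ⬝ᵥ x i) 0

/-- Jacobian of `netOut` with respect to the first-layer weights: the `i`-th row is
`(1/√m) (a₁ 1{w₁ᵀxᵢ ≥ 0} xᵢᵀ, …, aₘ 1{wₘᵀxᵢ ≥ 0} xᵢᵀ)`. -/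
noncomputable def jacNet {d n m : ℕ} (x : Fin n → Fin d → ℝ) (a : Fin m → ℝ)
    (w : Fin m → Fin d → ℝ) : Matrix (Fin n) (Fin m × Fin d) ℝ :=
  Matrix.of fun i rj =>
    (1 / Real.sqrt m) * a rj.1 * (if 0 ≤ w rj.1 ⬝ᵥ x i then 1 else 0) * x i rj.2

/-- Gram matrix `G(w) = J(w) J(w)ᵀ`. -/
noncomputable def gramNet {d n m : ℕ} (x : Fin n → Fin d → ℝ) (a : Fin m → ℝ)
    (w : Fin m → Fin d → ℝ) : Matrix (Fin n) (Fin n) ℝ :=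
  jacNet x a w * (jacNet x a w)ᵀ

/-- NGD iterates on the first-layer weights:
`w(k+1) = w(k) - η J(k)ᵀ G(k)⁻¹ (u(k) - y)`. -/
noncomputable def ngdNet {d n m : ℕ} (x : Fin n → Fin d → ℝ) (a : Fin m → ℝ)
    (y : Fin n → ℝ) (η : ℝ) (w0 : Fin m → Fin d → ℝ) : ℕ → Fin m → Fin d → ℝ
  | 0 => w0
  | k + 1 => fun r j =>
      ngdNet x a y η w0 k r j -
        η * (((jacNet x a (ngdNet x a y η w0 k))ᵀ *ᵥ
          ((gramNet x a (ngdNet x a y η w0 k))⁻¹ *ᵥ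
            (netOut x a (ngdNet x a y η w0 k) - y))) (r, j))

/-- Limiting Gram matrix `G^∞ᵢⱼ = xᵢᵀxⱼ (π - arccos(xᵢᵀxⱼ))/(2π)`. -/
noncomputable def ginf {d n : ℕ} (x : Fin n → Fin d → ℝ) : Matrix (Fin n) (Fin n) ℝ :=
  Matrix.of fun i j => x i ⬝ᵥ x j * (Real.pi - Real.arccos (x i ⬝ᵥ x j)) / (2 * Real.pi)

/-- Euclidean norm on the full weight vector `w ∈ ℝ^{md}`. -/
noncomputable def wnorm {d m : ℕ} (w : Fin m → Fin d → ℝ) : ℝ :=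
  Real.sqrt (∑ r : Fin m, w r ⬝ᵥ w r)

/-- Product Gaussian initialization measure: `wᵣ ~ N(0, ν² I_d)` i.i.d. -/
noncomputable def gaussInit (d m : ℕ) (ν : ℝ) : Measure (Fin m → Fin d → ℝ) :=
  Measure.pi fun _ : Fin m => Measure.pi fun _ : Fin d =>
    gaussianReal 0 (Real.toNNReal (ν ^ 2))

/-- Uniform `{±1}` measure on ℝ. -/
noncomputable def signMeasure : Measure ℝ :=
  (PMF.uniformOfFinset ({-1, 1} : Finset ℝ) ⟨-1, by simp⟩).toMeasure

instance : IsProbabilityMeasure signMeasure := by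
  unfold signMeasure; infer_instance

/-- Product uniform `{±1}` initialization measure for the output weights. -/
noncomputable def signInit (m : ℕ) : Measure (Fin m → ℝ) :=
  Measure.pi fun _ : Fin m => signMeasure

/-- Joint initialization measure over `(w(0), a)`. -/
noncomputable def initMeasure (d m : ℕ) (ν : ℝ) :
    Measure ((Fin m → Fin d → ℝ) × (Fin m → ℝ)) :=
  (gaussInit d m ν).prod (signInit m)

/-- The `k`-th smallest element (1-indexed) of a finite multiset of reals. -/
noncomputable def kthSmallest (s : Multiset ℝ) (k : ℕ) : ℝ :=
  (s.sort (· ≤ ·)).getD (k - 1) 0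

lemma abs_dot_le {ι : Type*} [Fintype ι] (f g : ι → ℝ) :
    |∑ j, f j * g j| ≤ Real.sqrt (∑ j, f j ^ 2) * Real.sqrt (∑ j, g j ^ 2) := by
  rw [← Real.sqrt_sq_eq_abs, ← Real.sqrt_mul (by positivity)]
  exact Real.sqrt_le_sqrt (Finset.sum_mul_sq_le_sq_mul_sq _ _ _)

lemma specNorm_sq_le_frob {ι κ : Type*} [Fintype ι] [Fintype κ] (A : Matrix ι κ ℝ) :
    specNorm A ^ 2 ≤ ∑ i, ∑ j, A i j ^ 2 := by
  have hF2 : (0:ℝ) ≤ ∑ i, ∑ j, A i j ^ 2 := by positivity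
  have hub : specNorm A ≤ Real.sqrt (∑ i, ∑ j, A i j ^ 2) := by
    apply Real.sSup_le _ (Real.sqrt_nonneg _)
    rintro r ⟨v, hv, rfl⟩
    have hv1 : ∑ j, v j * v j = 1 := Real.sqrt_eq_one.mp hv
    unfold enorm2
    apply Real.sqrt_le_sqrt
    apply Finset.sum_le_sum
    intro i _
    calc (A *ᵥ v) i * (A *ᵥ v) i = (∑ j, A i j * v j) ^ 2 := by
          simp [Matrix.mulVec, dotProduct, sq]
      _ ≤ (∑ j, A i j ^ 2) * ∑ j, v j ^ 2 := Finset.sum_mul_sq_le_sq_mul_sq _ _ _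
      _ = ∑ j, A i j ^ 2 := by
          rw [show (∑ j, v j ^ 2) = 1 by rw [← hv1]; congr 1; ext j; ring]
          ring
  have h0 : 0 ≤ specNorm A := by
    apply Real.sSup_nonneg
    rintro r ⟨v, hv, rfl⟩
    exact Real.sqrt_nonneg _
  calc specNorm A ^ 2 ≤ Real.sqrt (∑ i, ∑ j, A i j ^ 2) ^ 2 := by
        exact pow_le_pow_left₀ h0 hub 2
    _ = ∑ i, ∑ j, A i j ^ 2 := Real.sq_sqrt hF2

lemma filter_lt_kth (s : Multiset ℝ) (k : ℕ) (hk : 0 < k) (hkm : k ≤ Multiset.card s) :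
    Multiset.card (s.filter (fun z => z < kthSmallest s k)) ≤ k - 1 := by
  set l := s.sort (· ≤ ·) with hl
  have hsort : l.Pairwise (· ≤ ·) := s.pairwise_sort _
  have hlen : l.length = Multiset.card s := s.length_sort _
  have hklen : k - 1 < l.length := by omega
  have ht : kthSmallest s k = l.get ⟨k - 1, hklen⟩ := by
    unfold kthSmallest
    rw [← hl, List.getD_eq_getElem l 0 hklen]
    rfl
  set t := kthSmallest s k with htdef
  have hs_eq : s = (l : Multiset ℝ) := (s.sort_eq _).symm
  conv_lhs => rw [hs_eq, Multiset.filter_coe, Multiset.coe_card]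
  -- (l.filter p).length ≤ k - 1
  have hdecomp : l = l.take (k-1) ++ l.drop (k-1) := (List.take_append_drop _ _).symm
  set p : ℝ → Prop := fun z => z < t with hp
  have : List.filter (fun z => decide (p z)) l =
      List.filter (fun z => decide (p z)) (l.take (k-1)) ++
      List.filter (fun z => decide (p z)) (l.drop (k-1)) := by
    conv_lhs => rw [hdecomp]
    exact List.filter_append _ _
  have hdrop : List.filter (fun z => decide (p z)) (l.drop (k-1)) = [] := by
    rw [List.filter_eq_nil_iff]
    intro z hz
    simp only [decide_eq_true_eq]
    rw [List.mem_iff_getElem] at hz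
    obtain ⟨j, hj, rfl⟩ := hz
    have hjl : k - 1 + j < l.length := by
      rw [List.length_drop] at hj; omega
    rw [List.getElem_drop]
    have : l.get ⟨k-1, hklen⟩ ≤ l.get ⟨k-1+j, hjl⟩ :=
      hsort.rel_get_of_le (by simp [Fin.le_def])
    simp only [p, ht]
    exact not_lt.mpr (by simpa using this)
  have hlenle : (List.filter (fun z => decide (p z)) l).length ≤ k - 1 := by
    rw [this, hdrop, List.length_append, List.length_nil]
    calc (List.filter (fun z => decide (p z)) (l.take (k-1))).length + 0
        = (List.filter (fun z => decide (p z)) (l.take (k-1))).length := by ring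
      _ ≤ (l.take (k-1)).length := List.length_filter_le _ _
      _ ≤ k - 1 := by simp [List.length_take]
  simpa [p] using hlenle

/-- **Lemma (deterministic Jacobian perturbation bound).**
If for every training input `xᵢ` the weight perturbation satisfies
`‖w - w(0)‖ ≤ √k · [wᵣ(0)ᵀxᵢ]_{k-}`, where `[wᵣ(0)ᵀxᵢ]_{k-}` is the `k`-th smallest of
`|w₁(0)ᵀxᵢ|, …, |wₘ(0)ᵀxᵢ|`, then `‖J(w) - J(w(0))‖₂² ≤ 2nk/m`. -/
theorem jacobian_perturbation_deterministic
    (d n m : ℕ) (x : Fin n → Fin d → ℝ) (a : Fin m → ℝ)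
    (hx : ∀ i, vnorm (x i) = 1)
    (ha : ∀ r, a r = 1 ∨ a r = -1)
    (w0 w : Fin m → Fin d → ℝ) (k : ℕ) (hk : 0 < k)
    (hw : ∀ i : Fin n,
      wnorm (fun r => w r - w0 r) ≤
        Real.sqrt k *
          kthSmallest (Multiset.map (fun r => |w0 r ⬝ᵥ x i|) Finset.univ.val) k) :
    specNorm (jacNet x a w - jacNet x a w0) ^ 2 ≤ 2 * n * k / m := by
  classical
  set D := jacNet x a w - jacNet x a w0 with hDdef
  set b : Fin m → ℝ := fun r => Real.sqrt (∑ j, (w r j - w0 r j) ^ 2) with hbdef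
  have hwn2 : wnorm (fun r => w r - w0 r) ^ 2 = ∑ r, b r ^ 2 := by
    have hdot : ∀ r : Fin m,
        ((fun r => w r - w0 r) r) ⬝ᵥ ((fun r => w r - w0 r) r) = ∑ j, (w r j - w0 r j) ^ 2 := by
      intro r; simp [dotProduct, sq]
    unfold wnorm
    rw [Finset.sum_congr rfl (fun r _ => hdot r), Real.sq_sqrt (by positivity)]
    exact Finset.sum_congr rfl fun r _ => (Real.sq_sqrt (by positivity)).symm
  have key : ∀ i : Fin n, ∑ rj : Fin m × Fin d, D i rj ^ 2 ≤ 2 * k / m := by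
    intro i
    have hx2 : ∑ j, x i j ^ 2 = 1 := by
      have := hx i
      unfold vnorm at this
      have h1 : x i ⬝ᵥ x i = 1 := Real.sqrt_eq_one.mp this
      rw [← h1]; simp [dotProduct, sq]
    set flip : Fin m → Prop := fun r => ¬((0 ≤ w r ⬝ᵥ x i) ↔ (0 ≤ w0 r ⬝ᵥ x i)) with hflipdef
    set F : Finset (Fin m) := Finset.univ.filter flip with hFdef
    have hCS : ∀ r, |w r ⬝ᵥ x i - w0 r ⬝ᵥ x i| ≤ b r := by
      intro r
      have h1 : w r ⬝ᵥ x i - w0 r ⬝ᵥ x i = ∑ j, (w r j - w0 r j) * x i j := by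
        simp [dotProduct, Finset.sum_sub_distrib, sub_mul]
      rw [h1]
      calc |∑ j, (w r j - w0 r j) * x i j|
          ≤ Real.sqrt (∑ j, (w r j - w0 r j) ^ 2) * Real.sqrt (∑ j, x i j ^ 2) :=
            abs_dot_le _ _
        _ = b r := by rw [hx2, Real.sqrt_one, mul_one]
    have hK1 : ∀ r, flip r → |w0 r ⬝ᵥ x i| ≤ b r := by
      intro r hr
      have := hCS r
      set u := w r ⬝ᵥ x i
      set v := w0 r ⬝ᵥ x i
      by_cases h1 : 0 ≤ u <;> by_cases h2 : 0 ≤ v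
      · exact absurd (by tauto) hr
      · rw [abs_of_neg (not_le.mp h2)]
        rw [abs_of_nonneg (by linarith [not_le.mp h2] : (0:ℝ) ≤ u - v)] at this
        linarith
      · rw [abs_of_nonneg h2]
        rw [abs_of_neg (by linarith [not_le.mp h1] : u - v < 0)] at this
        linarith
      · exact absurd (by tauto) hr
    have hK1' : ∀ r, b r = 0 → ¬ flip r := by
      intro r hb0
      have := hCS r
      rw [hb0] at this
      have heq : w r ⬝ᵥ x i = w0 r ⬝ᵥ x i := by
        have := abs_nonneg (w r ⬝ᵥ x i - w0 r ⬝ᵥ x i)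
        have h0 : |w r ⬝ᵥ x i - w0 r ⬝ᵥ x i| = 0 := le_antisymm (by linarith) (by linarith)
        have := abs_eq_zero.mp h0
        linarith
      simp [flip, heq]
    set t := kthSmallest (Multiset.map (fun r => |w0 r ⬝ᵥ x i|) Finset.univ.val) k with htdef
    have hK2 : ∑ r, b r ^ 2 ≤ k * t ^ 2 := by
      rw [← hwn2]
      have h1 := hw i
      have h2 : wnorm (fun r => w r - w0 r) * wnorm (fun r => w r - w0 r) ≤
          (Real.sqrt k * t) * (Real.sqrt k * t) :=
        mul_self_le_mul_self (Real.sqrt_nonneg _) h1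
      calc wnorm (fun r => w r - w0 r) ^ 2
          = wnorm (fun r => w r - w0 r) * wnorm (fun r => w r - w0 r) := sq _
        _ ≤ (Real.sqrt k * t) * (Real.sqrt k * t) := h2
        _ = Real.sqrt k ^ 2 * t ^ 2 := by ring
        _ = k * t ^ 2 := by rw [Real.sq_sqrt (Nat.cast_nonneg k)]
    have hcard : (F.card : ℝ) ≤ 2 * k := by
      by_cases hcase : 0 < t
      · -- k ≤ m
        have hkm : k ≤ m := by
          by_contra hlt
          push_neg at hlt
          have hlen : (Multiset.map (fun r => |w0 r ⬝ᵥ x i|) Finset.univ.val).card = m := by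
            simp
          have ht0 : t = 0 := by
            rw [htdef]
            unfold kthSmallest
            apply List.getD_eq_default
            rw [Multiset.length_sort, hlen]
            omega
          rw [ht0] at hcase; exact lt_irrefl 0 hcase
        set q : Fin m → Prop := fun r => |w0 r ⬝ᵥ x i| < t with hqdef
        have hsplit : (F.filter q).card + (F.filter (fun r => ¬ q r)).card = F.card :=
          Finset.card_filter_add_card_filter_not q
        have hF1 : (F.filter q).card ≤ k - 1 := by
          have hsub : F.filter q ⊆ Finset.univ.filter q := by
            intro r hr
            simp only [Finset.mem_filter] at hr ⊢
            exact ⟨Finset.mem_univ r, hr.2⟩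
          have h1 : (F.filter q).card ≤ (Finset.univ.filter q).card :=
            Finset.card_le_card hsub
          have h2 : (Finset.univ.filter q).card =
              Multiset.card ((Multiset.map (fun r => |w0 r ⬝ᵥ x i|)
                Finset.univ.val).filter (fun z => z < t)) := by
            rw [Multiset.filter_map]
            simp only [Multiset.card_map]
            rfl
          have h3 := filter_lt_kth (Multiset.map (fun r => |w0 r ⬝ᵥ x i|) Finset.univ.val) k hk
            (by simp [hkm])
          rw [← htdef] at h3
          omega
        have hF2 : ((F.filter (fun r => ¬ q r)).card : ℝ) ≤ k := by
          have hsum : ((F.filter (fun r => ¬ q r)).card : ℝ) * t ^ 2 ≤ ∑ r, b r ^ 2 := by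
            calc ((F.filter (fun r => ¬ q r)).card : ℝ) * t ^ 2
                = ∑ _r ∈ F.filter (fun r => ¬ q r), t ^ 2 := by
                  rw [Finset.sum_const, nsmul_eq_mul]
              _ ≤ ∑ r ∈ F.filter (fun r => ¬ q r), b r ^ 2 := by
                  apply Finset.sum_le_sum
                  intro r hr
                  simp only [Finset.mem_filter, hFdef] at hr
                  have hflipr : flip r := hr.1.2
                  have htle : t ≤ |w0 r ⬝ᵥ x i| := not_lt.mp hr.2
                  have := hK1 r hflipr
                  have hbr : t ≤ b r := le_trans htle this
                  exact pow_le_pow_left₀ (le_of_lt hcase) hbr 2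
              _ ≤ ∑ r, b r ^ 2 := by
                  apply Finset.sum_le_sum_of_subset_of_nonneg (Finset.subset_univ _)
                  intro r _ _; positivity
          have := le_trans hsum hK2
          have ht2 : (0:ℝ) < t ^ 2 := by positivity
          exact le_of_mul_le_mul_right this ht2
        have hF1' : ((F.filter q).card : ℝ) ≤ k := by
          have : (F.filter q).card ≤ k := by omega
          exact_mod_cast this
        have : (F.card : ℝ) = ((F.filter q).card : ℝ) + ((F.filter (fun r => ¬ q r)).card : ℝ) := by
          exact_mod_cast (hsplit).symm
        rw [this]; linarith
      · push_neg at hcase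
        have hwn0 : wnorm (fun r => w r - w0 r) = 0 := by
          have h1 := hw i
          have h2 : Real.sqrt k * t ≤ 0 :=
            mul_nonpos_of_nonneg_of_nonpos (Real.sqrt_nonneg _) hcase
          exact le_antisymm (le_trans h1 h2) (Real.sqrt_nonneg _)
        have hsum0 : ∑ r, b r ^ 2 = 0 := by
          rw [← hwn2, hwn0]; ring
        have hb0 : ∀ r, b r = 0 := by
          intro r
          have h1 : ∀ r ∈ Finset.univ, (0:ℝ) ≤ b r ^ 2 := fun r _ => sq_nonneg _
          have := (Finset.sum_eq_zero_iff_of_nonneg h1).mp hsum0 r (Finset.mem_univ r)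
          have hbn : 0 ≤ b r := Real.sqrt_nonneg _
          nlinarith
        have hFe : F = ∅ := by
          rw [hFdef, Finset.filter_eq_empty_iff]
          intro r _
          exact hK1' r (hb0 r)
        rw [hFe]
        simp only [Finset.card_empty, Nat.cast_zero]
        positivity
    -- entrywise bound and summation
    have hentry : ∀ r : Fin m, ∀ j : Fin d,
        D i (r, j) ^ 2 ≤ (1 / m) * ((if flip r then 1 else 0) * x i j ^ 2) := by
      intro r j
      have hDe : D i (r, j) = (1 / Real.sqrt m) * a r *
          (((if 0 ≤ w r ⬝ᵥ x i then (1:ℝ) else 0)) - (if 0 ≤ w0 r ⬝ᵥ x i then (1:ℝ) else 0))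
          * x i j := by
        rw [hDdef]
        simp only [Matrix.sub_apply, jacNet, Matrix.of_apply]
        ring
      have ha2 : a r ^ 2 = 1 := by rcases ha r with h | h <;> rw [h] <;> norm_num
      have hm : (1 / Real.sqrt m) ^ 2 = 1 / m := by
        rw [div_pow, one_pow, Real.sq_sqrt (Nat.cast_nonneg m)]
      have hΔ : (((if 0 ≤ w r ⬝ᵥ x i then (1:ℝ) else 0)) -
          (if 0 ≤ w0 r ⬝ᵥ x i then (1:ℝ) else 0)) ^ 2 ≤ (if flip r then 1 else 0) := by
        by_cases h1 : 0 ≤ w r ⬝ᵥ x i <;> by_cases h2 : 0 ≤ w0 r ⬝ᵥ x i <;>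
          simp [flip, h1, h2]
      rw [hDe]
      calc ((1 / Real.sqrt m) * a r *
          (((if 0 ≤ w r ⬝ᵥ x i then (1:ℝ) else 0)) - (if 0 ≤ w0 r ⬝ᵥ x i then (1:ℝ) else 0))
          * x i j) ^ 2
          = (1 / Real.sqrt m) ^ 2 * a r ^ 2 *
            ((((if 0 ≤ w r ⬝ᵥ x i then (1:ℝ) else 0)) -
              (if 0 ≤ w0 r ⬝ᵥ x i then (1:ℝ) else 0)) ^ 2 * x i j ^ 2) := by ring
        _ = (1 / m) * ((((if 0 ≤ w r ⬝ᵥ x i then (1:ℝ) else 0)) -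
              (if 0 ≤ w0 r ⬝ᵥ x i then (1:ℝ) else 0)) ^ 2 * x i j ^ 2) := by
            rw [hm, ha2]; ring
        _ ≤ (1 / m) * ((if flip r then 1 else 0) * x i j ^ 2) := by
            apply mul_le_mul_of_nonneg_left _ (by positivity)
            exact mul_le_mul_of_nonneg_right hΔ (sq_nonneg _)
    calc ∑ rj : Fin m × Fin d, D i rj ^ 2
        = ∑ r : Fin m, ∑ j : Fin d, D i (r, j) ^ 2 := Fintype.sum_prod_type _
      _ ≤ ∑ r : Fin m, ∑ j : Fin d, (1 / m) * ((if flip r then 1 else 0) * x i j ^ 2) := by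
          apply Finset.sum_le_sum; intro r _
          apply Finset.sum_le_sum; intro j _
          exact hentry r j
      _ = (1 / m) * ∑ r : Fin m, (if flip r then (1:ℝ) else 0) := by
          rw [Finset.mul_sum]
          apply Finset.sum_congr rfl
          intro r _
          rw [← Finset.mul_sum, ← Finset.mul_sum, hx2, mul_one]
      _ = (1 / m) * (F.card : ℝ) := by
          rw [hFdef, Finset.sum_boole]
      _ ≤ (1 / m) * (2 * k) := by
          apply mul_le_mul_of_nonneg_left hcard (by positivity)
      _ = 2 * k / m := by ring
  calc specNorm D ^ 2 ≤ ∑ i, ∑ rj, D i rj ^ 2 := specNorm_sq_le_frob D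
    _ ≤ ∑ _i : Fin n, (2 * (k:ℝ) / m) := Finset.sum_le_sum fun i _ => key i
    _ = n * (2 * k / m) := by rw [Finset.sum_const, Finset.card_univ, Fintype.card_fin, nsmul_eq_mul]
    _ = 2 * n * k / m := by ring
end

section
/- Let θ : [0, ∞) → ℝ^p be a differentiable curve solving the natural gradient flow θ'(t) = J(θ(t))ᵀ G(θ(t))⁻¹ (y - u(θ(t))), where G(θ(t)) is invertible for every t ≥ 0. Then the output residual satisfies (d/dt) u(θ(t)) = y - u(θ(t)) for all t, and consequently ‖y - u(θ(t))‖₂² = e^{-2t} · ‖y - u(θ(0))‖₂² for all t ≥ 0. -/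
open Matrix MeasureTheory ProbabilityTheory Real
open scoped BigOperators ENNReal NNReal

/-- **Lemma (natural gradient flow converges linearly in function space).**
If `θ(t)` solves the natural gradient flow
`θ'(t) = J(θ(t))ᵀ G(θ(t))⁻¹ (y - u(θ(t)))` with `G(θ(t))` invertible for all `t ≥ 0`,
then `(d/dt) u(θ(t)) = y - u(θ(t))` and
`‖y - u(θ(t))‖² = e^{-2t} ‖y - u(θ(0))‖²` for all `t ≥ 0`. -/

theorem natural_gradient_flow_convergence {n p : ℕ}
    (u : (Fin p → ℝ) → Fin n → ℝ) (J : (Fin p → ℝ) → Matrix (Fin n) (Fin p) ℝ)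
    (hJ : ∀ θ, HasFDerivAt u (LinearMap.toContinuousLinearMap ((J θ).mulVecLin)) θ)
    (hJcont : Continuous J)
    (y : Fin n → ℝ)
    (θ : ℝ → Fin p → ℝ)
    (hflow : ∀ t : ℝ, 0 ≤ t →
      HasDerivAt θ
        ((J (θ t))ᵀ *ᵥ ((J (θ t) * (J (θ t))ᵀ)⁻¹ *ᵥ (y - u (θ t)))) t)
    (hinv : ∀ t : ℝ, 0 ≤ t → IsUnit (J (θ t) * (J (θ t))ᵀ)) :
    (∀ t : ℝ, 0 ≤ t → HasDerivAt (fun s => u (θ s)) (y - u (θ t)) t) ∧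
      ∀ t : ℝ, 0 ≤ t →
        vnorm (y - u (θ t)) ^ 2 = Real.exp (-2 * t) * vnorm (y - u (θ 0)) ^ 2 := by
  have hderiv : ∀ t : ℝ, 0 ≤ t → HasDerivAt (fun s => u (θ s)) (y - u (θ t)) t := by
    intro t ht
    have h := (hJ (θ t)).comp_hasDerivAt t (hflow t ht)
    have hval : (LinearMap.toContinuousLinearMap ((J (θ t)).mulVecLin))
        ((J (θ t))ᵀ *ᵥ ((J (θ t) * (J (θ t))ᵀ)⁻¹ *ᵥ (y - u (θ t)))) = y - u (θ t) := by
      simp only [LinearMap.coe_toContinuousLinearMap', Matrix.mulVecLin_apply]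
      rw [Matrix.mulVec_mulVec, Matrix.mulVec_mulVec,
        Matrix.mul_nonsing_inv _ ((Matrix.isUnit_iff_isUnit_det _).mp (hinv t ht)),
        Matrix.one_mulVec]
    rwa [hval] at h
  refine ⟨hderiv, ?_⟩
  -- residual and its squared norm
  set r : ℝ → Fin n → ℝ := fun s => y - u (θ s) with hr
  have hrderiv : ∀ t : ℝ, 0 ≤ t → HasDerivAt r (-(r t)) t := by
    intro t ht
    show HasDerivAt (fun s => y - u (θ s)) (-(y - u (θ t))) t
    exact (hderiv t ht).const_sub y
  set f : ℝ → ℝ := fun s => r s ⬝ᵥ r s with hf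
  have hfderiv : ∀ t : ℝ, 0 ≤ t → HasDerivAt f (-2 * f t) t := by
    intro t ht
    have hcomp : ∀ i, HasDerivAt (fun s => r s i) (-(r t) i) t := by
      intro i
      exact (hasDerivAt_pi.mp (hrderiv t ht)) i
    have : HasDerivAt f (∑ i, ((-(r t) i) * r t i + r t i * (-(r t) i))) t := by
      apply HasDerivAt.fun_sum
      intro i _
      exact (hcomp i).mul (hcomp i)
    convert this using 1
    show -2 * (r t ⬝ᵥ r t) = _
    rw [dotProduct, Finset.mul_sum]
    exact Finset.sum_congr rfl fun i _ => by ring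
  -- g = exp(2t) f t is constant on [0, ∞)
  set g : ℝ → ℝ := fun s => Real.exp (2 * s) * f s with hg
  have hgderiv : ∀ t : ℝ, 0 ≤ t → HasDerivAt g 0 t := by
    intro t ht
    have h1 : HasDerivAt (fun s => Real.exp (2 * s)) (2 * Real.exp (2 * t)) t := by
      simpa [mul_comm] using ((hasDerivAt_id t).const_mul 2).exp
    have : HasDerivAt (fun s => Real.exp (2 * s) * f s)
        (2 * Real.exp (2 * t) * f t + Real.exp (2 * t) * (-2 * f t)) t := h1.mul (hfderiv t ht)
    convert this using 1
    ring
  have hgconst : ∀ t : ℝ, 0 ≤ t → g t = g 0 := by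
    intro t ht
    have := constant_of_has_deriv_right_zero (f := g) (a := 0) (b := t)
      (fun x hx => ((hgderiv x hx.1).continuousAt.continuousWithinAt))
      (fun x hx => ((hgderiv x hx.1).hasDerivWithinAt))
    exact this t ⟨ht, le_rfl⟩
  intro t ht
  have hsq : ∀ v : Fin n → ℝ, vnorm v ^ 2 = v ⬝ᵥ v := by
    intro v
    have : (0:ℝ) ≤ v ⬝ᵥ v := Finset.sum_nonneg fun i _ => mul_self_nonneg _
    rw [vnorm, sq_sqrt this]
  have hkey := hgconst t ht
  simp only [hg] at hkey
  have : f t = Real.exp (-2 * t) * f 0 := by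
    have h0 : Real.exp (2 * (0:ℝ)) = 1 := by norm_num
    rw [h0, one_mul] at hkey
    rw [← hkey, ← mul_assoc, ← Real.exp_add]
    norm_num
  rw [hsq, hsq]
  simpa [hf, hr] using this
end

section
/- Suppose the network is linear in its parameters, i.e., u(θ) = u(θ(0)) + J·(θ - θ(0)) for a fixed matrix J ∈ ℝ^{n×p} with G = JJᵀ invertible. Then the NGD iterates θ(k+1) = θ(k) - η Jᵀ G⁻¹ (u(θ(k)) - y) satisfy y - u(θ(k+1)) = (1 - η)·(y - u(θ(k))) for every k; in particular, with step size η = 1, NGD reaches u(θ(1)) = y in a single iteration. -/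
open Matrix MeasureTheory ProbabilityTheory Real
open scoped BigOperators ENNReal NNReal

/-- **Lemma (NGD on a linearized network converges in one step).**
If the network is linear in its parameters, `u(θ) = u(θ(0)) + J(θ - θ(0))` with
`G = JJᵀ` invertible, then NGD satisfies
`y - u(θ(k+1)) = (1-η)(y - u(θ(k)))` for every `k`; in particular with `η = 1` it
reaches `u(θ(1)) = y` in one iteration. -/
theorem ngd_linear_network_one_step {n p : ℕ}
    (J : Matrix (Fin n) (Fin p) ℝ) (hG : IsUnit (J * Jᵀ))
    (θ0 : Fin p → ℝ) (y : Fin n → ℝ)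
    (u : (Fin p → ℝ) → Fin n → ℝ)
    (hu : ∀ θ : Fin p → ℝ, u θ = u θ0 + J *ᵥ (θ - θ0))
    (η : ℝ)
    (θ : ℕ → Fin p → ℝ) (hθ0 : θ 0 = θ0)
    (hθ : ∀ k : ℕ,
      θ (k + 1) = θ k - η • (Jᵀ *ᵥ ((J * Jᵀ)⁻¹ *ᵥ (u (θ k) - y)))) :
    (∀ k : ℕ, y - u (θ (k + 1)) = (1 - η) • (y - u (θ k))) ∧
      (η = 1 → u (θ 1) = y) := by
  have hGinv : (J * Jᵀ) * (J * Jᵀ)⁻¹ = 1 :=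
    Matrix.mul_nonsing_inv _ ((Matrix.isUnit_iff_isUnit_det _).mp hG)
  have key : ∀ k : ℕ, y - u (θ (k + 1)) = (1 - η) • (y - u (θ k)) := by
    intro k
    have h2 := hu (θ k)
    rw [hu (θ (k + 1)), hθ k]
    have hdiff : (θ k - η • (Jᵀ *ᵥ ((J * Jᵀ)⁻¹ *ᵥ (u (θ k) - y))) - θ0)
        = (θ k - θ0) - η • (Jᵀ *ᵥ ((J * Jᵀ)⁻¹ *ᵥ (u (θ k) - y))) := by
      abel
    rw [hdiff, Matrix.mulVec_sub, Matrix.mulVec_smul]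
    have hJJ : J *ᵥ (Jᵀ *ᵥ ((J * Jᵀ)⁻¹ *ᵥ (u (θ k) - y))) = u (θ k) - y := by
      rw [Matrix.mulVec_mulVec, Matrix.mulVec_mulVec,
        hGinv, Matrix.one_mulVec]
    rw [hJJ, h2]
    ext i
    simp only [Pi.sub_apply, Pi.add_apply, Pi.smul_apply, smul_eq_mul]
    ring
  refine ⟨key, fun hη => ?_⟩
  have h := key 0
  rw [hη, sub_self, zero_smul, sub_eq_zero] at h
  exact h.symm
end
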